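/- Let B ∈ ℝ^{n×m}, A ∈ ℝ^{n×n}, and let P, P̄ ∈ ℝ^{n×n} be symmetric positive semidefinite. Define K = −(BᵀPB+I)⁻¹BᵀPA and K̄ = −(BᵀP̄B+I)⁻¹BᵀP̄A. If K = K̄ and A + BK is invertible, then BᵀP = BᵀP̄. -/
import Mathlib

theorem stmt_11 {n m : ℕ} (A : Matrix (Fin n) (Fin n) ℝ) (B : Matrix (Fin n) (Fin m) ℝ)
    (P Pbar : Matrix (Fin n) (Fin n) ℝ) (hP : P.PosSemidef) (hPbar : Pbar.PosSemidef)
    (K Kbar : Matrix (Fin m) (Fin n) ℝ)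
    (hK : K = -((B.transpose * P * B + 1)⁻¹ * (B.transpose * P * A)))
    (hKbar : Kbar = -((B.transpose * Pbar * B + 1)⁻¹ * (B.transpose * Pbar * A)))
    (hKK : K = Kbar) (hAcl : IsUnit (A + B * K)) :
    B.transpose * P = B.transpose * Pbar := by
  have key : ∀ Q : Matrix (Fin n) (Fin n) ℝ, Q.PosSemidef →
      ∀ L : Matrix (Fin m) (Fin n) ℝ,
      L = -((B.transpose * Q * B + 1)⁻¹ * (B.transpose * Q * A)) →
      B.transpose * Q * (A + B * L) = -L := by
    intro Q hQ L hL
    have h1 : (B.transpose * Q * B).PosSemidef := by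
      have := hQ.conjTranspose_mul_mul_same B
      simpa using this
    have hpd : (B.transpose * Q * B + 1).PosDef :=
      Matrix.PosDef.posSemidef_add h1 Matrix.PosDef.one
    have hdet : IsUnit (B.transpose * Q * B + 1).det := hpd.det_pos.ne'.isUnit
    have hML : (B.transpose * Q * B + 1) * L = -(B.transpose * Q * A) := by
      rw [hL, Matrix.mul_neg, Matrix.mul_nonsing_inv_cancel_left _ _ hdet]
    have h2 : B.transpose * Q * B * L + L = -(B.transpose * Q * A) := by
      rwa [Matrix.add_mul, Matrix.one_mul] at hML
    calc B.transpose * Q * (A + B * L)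
        = B.transpose * Q * A + B.transpose * Q * B * L := by
          rw [Matrix.mul_add, Matrix.mul_assoc (B.transpose * Q) B L]
      _ = B.transpose * Q * A + (-(B.transpose * Q * A) - L) := by
          rw [← h2]; abel
      _ = -L := by abel
  have e1 := key P hP K hK
  have e2 := key Pbar hPbar Kbar hKbar
  rw [← hKK] at e2
  have hz : (B.transpose * P - B.transpose * Pbar) * (A + B * K) = 0 := by
    rw [Matrix.sub_mul, e1, e2, sub_self]
  have hdet := (Matrix.isUnit_iff_isUnit_det _).mp hAcl
  have hsub : B.transpose * P - B.transpose * Pbar = 0 := by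
    calc B.transpose * P - B.transpose * Pbar
        = (B.transpose * P - B.transpose * Pbar) * ((A + B * K) * (A + B * K)⁻¹) := by
          rw [Matrix.mul_nonsing_inv _ hdet, Matrix.mul_one]
      _ = 0 := by rw [← Matrix.mul_assoc, hz, Matrix.zero_mul]
  exact sub_eq_zero.mp hsub
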